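/- Let M → [1] be a cartesian fibration over the walking arrow classifying a functor G : D → C, where C = M₀ and D = M₁ are the fibers. Then the functor P(D) → P(C) between presheaf categories given by left Kan extension along the inclusion D ⊆ M followed by restriction along the inclusion C ⊆ M agrees (up to natural isomorphism) with left Kan extension of the composite D → C → P(C) along the Yoneda embedding, i.e. it is the colimit-preserving extension of y_C ∘ G. Consequently the Yoneda embeddings assemble into a map of cartesian fibrations M → P^{[1]}(M) over [1]. -/

import Mathlib

/-!
STATEMENT 17: Let `M ⥤ [1]` be a cartesian fibration over the walking arrow
classifying a functor `G : D ⥤ C`, where `C = M₀` and `D = M₁` are the fibers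
(the classification being witnessed by cartesian lifts `ℓ_d : G(d) ⟶ d` of
the arrow `0 ⟶ 1`, natural in `d`).  Then the functor `P(D) ⥤ P(C)` between
presheaf categories given by left Kan extension along the inclusion `D ⊆ M`
followed by restriction along the inclusion `C ⊆ M` agrees, up to natural
isomorphism, with the colimit-preserving extension of `y_C ∘ G` along the
Yoneda embedding: it preserves colimits and its composite with the Yoneda
embedding of `D` is naturally isomorphic to `G ⋙ yoneda`.  (In particular
the Yoneda embeddings of the fibers assemble into a map of cartesian
fibrations `M ⟶ P^{[1]}(M)` over `[1]`.)
-/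

open CategoryTheory Limits

universe u

variable {M : Type u} [Category.{u} M]

/-- A morphism `g : X ⟶ Y` is `p`-cartesian. -/
def IsCartesianMor {E B : Type*} [Category E] [Category B] (p : E ⥤ B)
    {X Y : E} (g : X ⟶ Y) : Prop :=
  ∀ (Z : E) (h : Z ⟶ Y) (u : p.obj Z ⟶ p.obj X),
    p.map h = u ≫ p.map g → ∃! k : Z ⟶ X, p.map k = u ∧ k ≫ g = h

/-- The fiber of `p : M ⥤ [1]` over `i`. -/
abbrev Fiber (p : M ⥤ Fin 2) (i : Fin 2) := ObjectProperty.FullSubcategory (fun X => p.obj X = i)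

/-- The inclusion of the fiber into `M`. -/
abbrev fiberIncl (p : M ⥤ Fin 2) (i : Fin 2) : Fiber p i ⥤ M :=
  ObjectProperty.ι _

/-- The functor `P(M₁) ⥤ P(M₀)` on presheaf categories: left Kan extension
along the inclusion `M₁ ⊆ M` followed by restriction along the inclusion
`M₀ ⊆ M`. -/
noncomputable def lanRestrict (p : M ⥤ Fin 2) :
    ((Fiber p 1)ᵒᵖ ⥤ Type u) ⥤ ((Fiber p 0)ᵒᵖ ⥤ Type u) :=
  (fiberIncl p 1).op.lan ⋙ (Functor.whiskeringLeft _ _ (Type u)).obj (fiberIncl p 0).op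

section Aux

variable (p : M ⥤ Fin 2) (G : Fiber p 1 ⥤ Fiber p 0)
  (ℓ : ∀ d : Fiber p 1, (G.obj d).obj ⟶ d.obj)
  (hcart : ∀ d : Fiber p 1, IsCartesianMor p (ℓ d))

/-- The bijection `Hom_C(c, G d) ≃ Hom_M(c, d)` given by composition with the
cartesian lift `ℓ d`. -/
noncomputable def cartEquiv (d : Fiber p 1) (c : Fiber p 0) :
    (c.obj ⟶ (G.obj d).obj) ≃ (c.obj ⟶ d.obj) where
  toFun k := k ≫ ℓ d
  invFun h := (hcart d c.obj h (eqToHom (by rw [c.property, (G.obj d).property]))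
      (Subsingleton.elim _ _)).choose
  left_inv k := ((hcart d c.obj (k ≫ ℓ d) _ (Subsingleton.elim _ _)).choose_spec.2 k
      ⟨Subsingleton.elim _ _, rfl⟩).symm
  right_inv h := (hcart d c.obj h _ (Subsingleton.elim _ _)).choose_spec.1.2

lemma cartEquiv_symm_natural_left (d : Fiber p 1) {c c' : Fiber p 0}
    (f : c' ⟶ c) (h : c.obj ⟶ d.obj) :
    (cartEquiv p G ℓ hcart d c').symm ((fiberIncl p 0).map f ≫ h) =
      (fiberIncl p 0).map f ≫ (cartEquiv p G ℓ hcart d c).symm h := by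
  apply (cartEquiv p G ℓ hcart d c').injective
  rw [Equiv.apply_symm_apply]
  symm
  show ((fiberIncl p 0).map f ≫ (cartEquiv p G ℓ hcart d c).symm h) ≫ ℓ d =
    (fiberIncl p 0).map f ≫ h
  rw [Category.assoc]
  congr 1
  exact (cartEquiv p G ℓ hcart d c).apply_symm_apply h

lemma cartEquiv_symm_natural_right
    (hnat : ∀ {d d' : Fiber p 1} (f : d ⟶ d'),
      (fiberIncl p 0).map (G.map f) ≫ ℓ d' = ℓ d ≫ (fiberIncl p 1).map f)
    {d d' : Fiber p 1} (f : d ⟶ d') (c : Fiber p 0) (h : c.obj ⟶ d.obj) :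
    (cartEquiv p G ℓ hcart d' c).symm (h ≫ (fiberIncl p 1).map f) =
      (cartEquiv p G ℓ hcart d c).symm h ≫ (fiberIncl p 0).map (G.map f) := by
  apply (cartEquiv p G ℓ hcart d' c).injective
  rw [Equiv.apply_symm_apply]
  symm
  show ((cartEquiv p G ℓ hcart d c).symm h ≫ (fiberIncl p 0).map (G.map f)) ≫ ℓ d' =
    h ≫ (fiberIncl p 1).map f
  rw [Category.assoc]
  show (cartEquiv p G ℓ hcart d c).symm h ≫
      (fiberIncl p 0).map (G.map f) ≫ ℓ d' = _
  rw [hnat f, ← Category.assoc]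
  congr 1
  exact (cartEquiv p G ℓ hcart d c).apply_symm_apply h

/-- The natural isomorphism
`(D ⊆ M) ⋙ yoneda_M ⋙ restriction ≅ G ⋙ yoneda_C`. -/
noncomputable def cartIso
    (hnat : ∀ {d d' : Fiber p 1} (f : d ⟶ d'),
      (fiberIncl p 0).map (G.map f) ≫ ℓ d' = ℓ d ≫ (fiberIncl p 1).map f) :
    fiberIncl p 1 ⋙ yoneda ⋙
      (Functor.whiskeringLeft (Fiber p 0)ᵒᵖ Mᵒᵖ (Type u)).obj (fiberIncl p 0).op ≅
    G ⋙ yoneda :=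
  NatIso.ofComponents
    (fun d => NatIso.ofComponents
      (fun c => (Equiv.toIso ((cartEquiv p G ℓ hcart d c.unop).symm.trans
        (ObjectProperty.fullyFaithfulι _).homEquiv.symm)))
      (fun {c c'} f => by
        ext h
        exact ObjectProperty.hom_ext _ (cartEquiv_symm_natural_left p G ℓ hcart d f.unop h)))
    (fun {d d'} f => by
      ext c h
      exact ObjectProperty.hom_ext _ (cartEquiv_symm_natural_right p G ℓ hcart hnat f c.unop h))

end Aux

theorem statement17 (p : M ⥤ Fin 2)
    (G : Fiber p 1 ⥤ Fiber p 0)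
    (ℓ : ∀ d : Fiber p 1, (G.obj d).obj ⟶ d.obj)
    (hnat : ∀ {d d' : Fiber p 1} (f : d ⟶ d'),
      (fiberIncl p 0).map (G.map f) ≫ ℓ d' = ℓ d ≫ (fiberIncl p 1).map f)
    (hcart : ∀ d : Fiber p 1, IsCartesianMor p (ℓ d)) :
    Nonempty (yoneda ⋙ lanRestrict p ≅ G ⋙ yoneda) ∧
    Nonempty (PreservesColimitsOfSize.{u, u} (lanRestrict p)) := by
  constructor
  · exact ⟨(Functor.associator _ _ _).symm ≪≫
      Functor.isoWhiskerRight (Functor.isoWhiskerRight uliftYonedaIsoYoneda.{u}.symm _ ≪≫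
        (Presheaf.compULiftYonedaIsoULiftYonedaCompLan.{0} (fiberIncl p 1)).symm ≪≫
        Functor.isoWhiskerLeft _ uliftYonedaIsoYoneda.{u}) _ ≪≫
      Functor.associator _ _ _ ≪≫ cartIso p G ℓ hcart hnat⟩
  · refine ⟨?_⟩
    have h1 : PreservesColimitsOfSize.{u, u} ((fiberIncl p 1).op.lan :
        ((Fiber p 1)ᵒᵖ ⥤ Type u) ⥤ (Mᵒᵖ ⥤ Type u)) :=
      ((fiberIncl p 1).op.lanAdjunction (Type u)).leftAdjoint_preservesColimits
    have h2 : PreservesColimitsOfSize.{u, u}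
        ((Functor.whiskeringLeft (Fiber p 0)ᵒᵖ Mᵒᵖ (Type u)).obj (fiberIncl p 0).op) :=
      ((fiberIncl p 0).op.ranAdjunction (Type u)).leftAdjoint_preservesColimits
    exact comp_preservesColimits _ _
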